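/- Let f : U → ℝ^n (U ⊆ ℝ^n open and convex) be C¹ with ∂f_i/∂x_j ≥ 0 on U for all i ≠ j (a cooperative/monotone vector field). Let p ∈ U with f_i(p) > 0 for all i. Then for any point y ∈ U with y ≥ p (componentwise) and y_i = p_i for some index i, we have f_i(y) > 0. Consequently the vector field points strictly into the set K₂(p) = {x ∈ U : x ≥ p} along its boundary in each coordinate direction where the boundary is active. -/

import Mathlib

/-- Cooperative vector fields point strictly into `K₂(p) = {x : x ≥ p}` along
its boundary: if `f` is `C¹` on an open convex set `U` with nonnegative
off-diagonal partial derivatives, `f i p > 0` for all `i`, and `y ≥ p` with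
`y i = p i` for some `i`, then `f i y > 0`. The partial derivatives are
expressed via a derivative `f'` of `f` on `U`. -/
theorem cooperative_inflow_K2 {n : ℕ}
    (U : Set (Fin n → ℝ)) (hU : IsOpen U) (hUconv : Convex ℝ U)
    (f : (Fin n → ℝ) → (Fin n → ℝ))
    (f' : (Fin n → ℝ) → ((Fin n → ℝ) →L[ℝ] (Fin n → ℝ)))
    (hf : ∀ x ∈ U, HasFDerivAt f (f' x) x)
    (hf'cont : ContinuousOn f' U)
    (hcoop : ∀ x ∈ U, ∀ i j : Fin n, i ≠ j → 0 ≤ f' x (Pi.single j 1) i)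
    (p : Fin n → ℝ) (hp : p ∈ U) (hfp : ∀ i, 0 < f p i)
    (y : Fin n → ℝ) (hy : y ∈ U) (hpy : p ≤ y)
    (i : Fin n) (hyi : y i = p i) :
    0 < f y i := by
  set v : Fin n → ℝ := y - p with hv
  have hvi : v i = 0 := by simp [hv, hyi]
  have hvnn : ∀ j, 0 ≤ v j := fun j => sub_nonneg.mpr (hpy j)
  set c : ℝ → (Fin n → ℝ) := fun t => p + t • v with hc
  have hseg : ∀ t ∈ Set.Icc (0:ℝ) 1, c t ∈ U := by
    intro t ht
    have h := hUconv hp hy (by linarith [ht.2] : (0:ℝ) ≤ 1 - t) ht.1 (by ring)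
    convert h using 1
    simp only [hc, hv]
    module
  have key : ∀ x ∈ U, 0 ≤ f' x v i := by
    intro x hx
    have hvsum : v = ∑ j, v j • (Pi.single j 1 : Fin n → ℝ) := by
      ext k
      simp [Finset.sum_apply, Pi.single_apply]
    rw [hvsum, map_sum, Finset.sum_apply]
    apply Finset.sum_nonneg
    intro j _
    rcases eq_or_ne j i with rfl | hji
    · simp [hvi]
    · simp only [map_smul, ContinuousLinearMap.coe_smul', Pi.smul_apply, smul_eq_mul]
      exact mul_nonneg (hvnn j) (hcoop x hx i j hji.symm)
  set g : ℝ → ℝ := fun t => f (c t) i with hg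
  have hc' : ∀ t : ℝ, HasDerivAt c v t := by
    intro t
    have : HasDerivAt (fun t : ℝ => t • v) ((1:ℝ) • v) t :=
      (hasDerivAt_id t).smul_const v
    have h := this.const_add p
    rw [one_smul] at h
    exact h
  have hg' : ∀ t ∈ Set.Icc (0:ℝ) 1, HasDerivAt g (f' (c t) v i) t := by
    intro t ht
    have h1 : HasDerivAt (fun t => f (c t)) (f' (c t) v) t :=
      (hf (c t) (hseg t ht)).comp_hasDerivAt t (hc' t)
    have h2 := (ContinuousLinearMap.proj (R := ℝ) (φ := fun _ : Fin n => ℝ) i).hasFDerivAt.comp_hasDerivAt t h1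
    exact h2
  have hmono : MonotoneOn g (Set.Icc (0:ℝ) 1) := by
    apply monotoneOn_of_deriv_nonneg (convex_Icc 0 1)
    · exact fun t ht => (hg' t ht).continuousAt.continuousWithinAt
    · intro t ht
      rw [interior_Icc] at ht
      exact ((hg' t (Set.mem_Icc_of_Ioo ht)).differentiableAt).differentiableWithinAt
    · intro t ht
      rw [interior_Icc] at ht
      rw [(hg' t (Set.mem_Icc_of_Ioo ht)).deriv]
      exact key (c t) (hseg t (Set.mem_Icc_of_Ioo ht))
  have h01 : g 0 ≤ g 1 :=
    hmono (Set.left_mem_Icc.mpr zero_le_one) (Set.right_mem_Icc.mpr zero_le_one) zero_le_one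
  have hg0 : g 0 = f p i := by simp [hg, hc]
  have hg1 : g 1 = f y i := by
    have : c 1 = y := by simp only [hc, hv, one_smul]; abel
    simp [hg, this]
  rw [← hg1]
  rw [hg0] at h01
  exact lt_of_lt_of_le (hfp i) h01
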